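/- Let μ be a centered, compactly supported Borel probability measure on ℝ that is not a Dirac mass, and let μ̂ be a Nevanlinna measure for μ. If E ∈ ℝ satisfies dist(E, supp μ) > 0 and ∫_ℝ (x − E)⁻¹ dμ(x) = 0, then μ̂({E}) > 0, i.e. E is an atom of μ̂. -/

import Mathlib

open MeasureTheory Complex Set Filter Topology

noncomputable section

/-- Cauchy–Stieltjes transform `m_μ(z) = ∫ (x − z)⁻¹ dμ(x)`. -/
def mTr (μ : Measure ℝ) (z : ℂ) : ℂ := ∫ x, ((x : ℂ) - z)⁻¹ ∂μ

/-- Negative reciprocal Cauchy–Stieltjes transform `F_μ(z) = −1/m_μ(z)`. -/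
def FTr (μ : Measure ℝ) (z : ℂ) : ℂ := -(mTr μ z)⁻¹

/-- `I_ν(ω) = ∫ |x − ω|⁻² dν(x)`. -/
def Inu (ν : Measure ℝ) (ω : ℂ) : ℝ := ∫ x, (Complex.normSq ((x : ℂ) - ω))⁻¹ ∂ν

/-- Topological support of a Borel measure on ℝ. -/
def msupport (μ : Measure ℝ) : Set ℝ := {x | ∀ U : Set ℝ, IsOpen U → x ∈ U → 0 < μ U}

/-- `μh` is a Nevanlinna measure for the (centered) measure `μ`:
a finite Borel measure with `F_μ(ω) − ω = ∫ (x − ω)⁻¹ dμh(x)` on ℂ⁺. -/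
def IsNevanlinna (μ μh : Measure ℝ) : Prop :=
  IsFiniteMeasure μh ∧ ∀ ω : ℂ, 0 < ω.im → FTr μ ω - ω = ∫ x, ((x : ℂ) - ω)⁻¹ ∂μh

/-- Subordination function for `μ` at time `t`. -/
structure IsSubordination (μ : Measure ℝ) (t : ℝ) (ω : ℂ → ℂ) : Prop where
  contOn : ContinuousOn ω {z : ℂ | 0 ≤ z.im}
  mapsTo : ∀ z : ℂ, 0 ≤ z.im → 0 ≤ (ω z).im
  diff : DifferentiableOn ℂ ω {z : ℂ | 0 < z.im}
  im_ge : ∀ z : ℂ, 0 < z.im → z.im ≤ (ω z).im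
  subord : ∀ z : ℂ, 0 < z.im → (t : ℂ) * ω z - z = ((t - 1 : ℝ) : ℂ) * FTr μ (ω z)

/-- `ν = μ^{⊞t}`, the free convolution power associated with the subordination function `ω`. -/
def IsFreePower (μ : Measure ℝ) (t : ℝ) (ω : ℂ → ℂ) (ν : Measure ℝ) : Prop :=
  IsProbabilityMeasure ν ∧ ∀ z : ℂ, 0 < z.im → mTr ν z = mTr μ (ω z)

/-- Subordination functions for the pair `(μa, μb)`. -/
structure IsPairSubordination (μa μb : Measure ℝ) (ωa ωb : ℂ → ℂ) : Prop where
  diff_a : DifferentiableOn ℂ ωa {z : ℂ | 0 < z.im}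
  diff_b : DifferentiableOn ℂ ωb {z : ℂ | 0 < z.im}
  im_a : ∀ z : ℂ, 0 < z.im → z.im ≤ (ωa z).im
  im_b : ∀ z : ℂ, 0 < z.im → z.im ≤ (ωb z).im
  lim_a : Tendsto (fun η : ℝ => ωa (η * Complex.I) / (η * Complex.I)) atTop (nhds 1)
  lim_b : Tendsto (fun η : ℝ => ωb (η * Complex.I) / (η * Complex.I)) atTop (nhds 1)
  eq_a : ∀ z : ℂ, 0 < z.im → ωa z + ωb z - z = FTr μa (ωb z)
  eq_b : ∀ z : ℂ, 0 < z.im → ωa z + ωb z - z = FTr μb (ωa z)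

/-- `ν = μa ⊞ μb`, the free additive convolution. -/
def IsFreeConv (μa μb : Measure ℝ) (ωb : ℂ → ℂ) (ν : Measure ℝ) : Prop :=
  IsProbabilityMeasure ν ∧ ∀ z : ℂ, 0 < z.im → mTr ν z = mTr μa (ωb z)

/-- Assumption 1 of the paper: `μ` is a centered, compactly supported probability
measure whose singular part consists of finitely many atoms and whose absolutely
continuous part has a density `ρ` of Jacobi type, supported on finitely many
disjoint compact intervals with power-law behavior (exponents in `(−1,1)`). -/
structure JacobiData (μ : Measure ℝ) where
  ρ : ℝ → ℝ
  n : ℕ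
  npos : 0 < n
  Em : Fin n → ℝ
  Ep : Fin n → ℝ
  βm : Fin n → ℝ
  βp : Fin n → ℝ
  Cj : Fin n → ℝ
  atoms : Finset ℝ
  w : ℝ → ℝ
  prob : IsProbabilityMeasure μ
  compactSupp : ∃ K : Set ℝ, IsCompact K ∧ μ Kᶜ = 0
  centered : ∫ x, x ∂μ = 0
  lt : ∀ j, Em j < Ep j
  disj : ∀ i j, i ≠ j → Disjoint (Set.Icc (Em i) (Ep i)) (Set.Icc (Em j) (Ep j))
  βm_mem : ∀ j, βm j ∈ Set.Ioo (-1 : ℝ) 1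
  βp_mem : ∀ j, βp j ∈ Set.Ioo (-1 : ℝ) 1
  Cj_ge : ∀ j, 1 ≤ Cj j
  ρ_nonneg : ∀ x, 0 ≤ ρ x
  ρ_supp : ∀ x, x ∉ ⋃ j, Set.Icc (Em j) (Ep j) → ρ x = 0
  powerLaw : ∀ j, ∀ᵐ E ∂(volume.restrict (Set.Icc (Em j) (Ep j))),
      (Cj j)⁻¹ * ((E - Em j) ^ (βm j) * (Ep j - E) ^ (βp j)) ≤ ρ E ∧
      ρ E ≤ Cj j * ((E - Em j) ^ (βm j) * (Ep j - E) ^ (βp j))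
  w_nonneg : ∀ a, 0 ≤ w a
  decomp : μ = volume.withDensity (fun x => ENNReal.ofReal (ρ x))
      + ∑ a ∈ atoms, ENNReal.ofReal (w a) • Measure.dirac a

/-- The support of the absolutely continuous part of `μ`. -/
def JacobiData.acSupport {μ : Measure ℝ} (d : JacobiData μ) : Set ℝ :=
  ⋃ j, Set.Icc (d.Em j) (d.Ep j)

/-- The Hölder condition (5.1)/(2.8) of the paper on the density of `μ_ac`. -/
def JacobiData.HolderCond {μ : Measure ℝ} (d : JacobiData μ) : Prop :=
  ∀ j, ∃ L γ : NNReal, 0 < γ ∧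
    HolderOnWith L γ
      (fun E => d.ρ E / ((E - d.Em j) ^ (d.βm j) * (d.Ep j - E) ^ (d.βp j)))
      (Set.Icc (d.Em j) (d.Ep j))

/-- Assumption 2 of the paper: a centered, absolutely continuous probability measure
supported on finitely many disjoint compact intervals, with density of Jacobi type. -/
structure AbsJacobiData (μ : Measure ℝ) where
  ρ : ℝ → ℝ
  n : ℕ
  npos : 0 < n
  Am : Fin n → ℝ
  Ap : Fin n → ℝ
  sm : Fin n → ℝ
  sp : Fin n → ℝ
  Cj : Fin n → ℝ
  prob : IsProbabilityMeasure μ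
  centered : ∫ x, x ∂μ = 0
  lt : ∀ j, Am j < Ap j
  disj : ∀ i j, i ≠ j → Disjoint (Set.Icc (Am i) (Ap i)) (Set.Icc (Am j) (Ap j))
  sm_mem : ∀ j, sm j ∈ Set.Ioo (-1 : ℝ) 1
  sp_mem : ∀ j, sp j ∈ Set.Ioo (-1 : ℝ) 1
  Cj_ge : ∀ j, 1 ≤ Cj j
  ρ_nonneg : ∀ x, 0 ≤ ρ x
  ρ_supp : ∀ x, x ∉ ⋃ j, Set.Icc (Am j) (Ap j) → ρ x = 0
  powerLaw : ∀ j, ∀ᵐ E ∂(volume.restrict (Set.Icc (Am j) (Ap j))),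
      (Cj j)⁻¹ * ((E - Am j) ^ (sm j) * (Ap j - E) ^ (sp j)) ≤ ρ E ∧
      ρ E ≤ Cj j * ((E - Am j) ^ (sm j) * (Ap j - E) ^ (sp j))
  decomp : μ = volume.withDensity (fun x => ENNReal.ofReal (ρ x))


private lemma my_integral_ofReal (μ : Measure ℝ) (f : ℝ → ℝ) :
    ∫ x, ((f x : ℝ) : ℂ) ∂μ = ((∫ x, f x ∂μ : ℝ) : ℂ) := integral_ofReal

private lemma my_integral_im {μ : Measure ℝ} {f : ℝ → ℂ} (hf : Integrable f μ) :
    ∫ x, (f x).im ∂μ = (∫ x, f x ∂μ).im := integral_im hf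

set_option maxHeartbeats 2000000 in
theorem statement1 (μ : Measure ℝ) (hprob : IsProbabilityMeasure μ)
    (hcpt : ∃ K : Set ℝ, IsCompact K ∧ μ Kᶜ = 0)
    (hcent : ∫ x, x ∂μ = 0)
    (hnd : ∀ a : ℝ, μ ≠ Measure.dirac a)
    (μh : Measure ℝ) (hNev : IsNevanlinna μ μh)
    (E : ℝ) (hdist : 0 < Metric.infDist E (msupport μ))
    (hzero : ∫ x, (x - E)⁻¹ ∂μ = 0) :
    0 < μh {E} := by
  classical
  obtain ⟨K, hKc, hKnull⟩ := hcpt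
  have hfin : IsFiniteMeasure μh := hNev.1
  set δ : ℝ := Metric.infDist E (msupport μ) with hδ
  set l : Filter ℝ := 𝓝[>] (0:ℝ) with hl
  -- μ vanishes off its support
  have hSnull : μ (msupport μ)ᶜ = 0 := by
    apply measure_null_of_locally_null
    intro x hx
    simp only [msupport, mem_compl_iff, mem_setOf_eq, not_forall] at hx
    obtain ⟨U, hU, hxU, hμU⟩ := hx
    exact ⟨U, mem_nhdsWithin_of_mem_nhds (hU.mem_nhds hxU),
      by simpa using (not_lt.mp hμU)⟩
  -- a.e. lower bound on |x - E|
  have hae1 : ∀ᵐ x ∂μ, δ ≤ |x - E| := by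
    rw [ae_iff]
    refine measure_mono_null (fun x hx => ?_) hSnull
    rw [mem_setOf_eq, not_le] at hx
    rw [mem_compl_iff]
    intro hxS
    have h2 := Metric.infDist_le_dist_of_mem (x := E) hxS
    rw [Real.dist_eq, abs_sub_comm] at h2
    exact absurd h2 (not_le.mpr hx)
  -- upper bound R
  obtain ⟨r, hKr⟩ := hKc.isBounded.subset_closedBall E
  set R : ℝ := max r δ with hR
  have hRpos : 0 < R := lt_of_lt_of_le hdist (le_max_right _ _)
  have hae2 : ∀ᵐ x ∂μ, |x - E| ≤ R := by
    rw [ae_iff]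
    refine measure_mono_null (fun x hx => ?_) hKnull
    rw [mem_setOf_eq, not_le] at hx
    rw [mem_compl_iff]
    intro hxK
    have h2 := hKr hxK
    rw [Metric.mem_closedBall, Real.dist_eq] at h2
    exact absurd (h2.trans (le_max_left r δ)) (not_le.mpr hx)
  have hae : ∀ᵐ x ∂μ, δ ≤ |x - E| ∧ |x - E| ≤ R := hae1.and hae2
  -- basic complex computations
  have hsub_re : ∀ x η : ℝ, ((x:ℂ) - ((E:ℂ) + η * Complex.I)).re = x - E := by
    intro x η; simp
  have hsub_im : ∀ x η : ℝ, ((x:ℂ) - ((E:ℂ) + η * Complex.I)).im = -η := by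
    intro x η; simp
  have hnormSq : ∀ x η : ℝ, Complex.normSq ((x:ℂ) - ((E:ℂ) + η * Complex.I))
      = (x - E) * (x - E) + η * η := by
    intro x η
    rw [Complex.normSq_apply, hsub_re, hsub_im]; ring
  have hlb : ∀ x η : ℝ, |x - E| ≤ ‖(x:ℂ) - ((E:ℂ) + η * Complex.I)‖ := by
    intro x η
    simpa [hsub_re] using Complex.abs_re_le_norm ((x:ℂ) - ((E:ℂ) + η * Complex.I))
  have hlb2 : ∀ x η : ℝ, |η| ≤ ‖(x:ℂ) - ((E:ℂ) + η * Complex.I)‖ := by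
    intro x η
    have := Complex.abs_im_le_norm ((x:ℂ) - ((E:ℂ) + η * Complex.I))
    rwa [hsub_im, abs_neg] at this
  have hne : ∀ (x η : ℝ), η ≠ 0 → (x:ℂ) - ((E:ℂ) + η * Complex.I) ≠ 0 := by
    intro x η hη h0
    have h1 := hsub_im x η
    rw [h0] at h1
    simp only [Complex.zero_im] at h1
    exact hη (by linarith)
  -- norm bounds
  have hbnd1 : ∀ (η x : ℝ), δ ≤ |x - E| → ‖((x:ℂ) - ((E:ℂ) + η * Complex.I))⁻¹‖ ≤ δ⁻¹ := by
    intro η x hx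
    rw [norm_inv]
    exact inv_anti₀ hdist (hx.trans (hlb x η))
  have habs0 : ∀ x : ℝ, ‖((x:ℂ) - (E:ℂ))⁻¹‖ = |x - E|⁻¹ := by
    intro x
    have h1 : ((x:ℂ) - (E:ℂ)) = ((x - E : ℝ) : ℂ) := by push_cast; ring
    rw [norm_inv, h1, Complex.norm_real, Real.norm_eq_abs]
  have hbnd0 : ∀ x : ℝ, δ ≤ |x - E| → ‖((x:ℂ) - (E:ℂ))⁻¹‖ ≤ δ⁻¹ := by
    intro x hx
    rw [habs0]
    exact inv_anti₀ hdist hx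
  have hneq0 : ∀ x : ℝ, δ ≤ |x - E| → (x:ℂ) - (E:ℂ) ≠ 0 := by
    intro x hx h0
    have hxE : (x:ℝ) = E := by exact_mod_cast sub_eq_zero.mp h0
    rw [hxE, sub_self, abs_zero] at hx
    exact absurd (lt_of_lt_of_le hdist hx) (lt_irrefl 0)
  -- measurability
  have hmeas1 : ∀ (ν : Measure ℝ) (η : ℝ),
      AEStronglyMeasurable (fun x : ℝ => ((x:ℂ) - ((E:ℂ) + η * Complex.I))⁻¹) ν :=
    fun ν η => ((Complex.measurable_ofReal.sub_const _).inv).aestronglyMeasurable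
  have hmeas0 : AEStronglyMeasurable (fun x : ℝ => ((x:ℂ) - (E:ℂ))⁻¹) μ :=
    ((Complex.measurable_ofReal.sub_const _).inv).aestronglyMeasurable
  -- integrability over μ
  have hint1 : ∀ η : ℝ, Integrable (fun x : ℝ => ((x:ℂ) - ((E:ℂ) + η * Complex.I))⁻¹) μ := by
    intro η
    refine (integrable_const (δ⁻¹)).mono' (hmeas1 μ η) ?_
    filter_upwards [hae1] with x hx using hbnd1 η x hx
  have hint0 : Integrable (fun x : ℝ => ((x:ℂ) - (E:ℂ))⁻¹) μ := by
    refine (integrable_const (δ⁻¹)).mono' hmeas0 ?_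
    filter_upwards [hae1] with x hx using hbnd0 x hx
  -- J and its integrand
  set Jf : ℝ → ℝ → ℂ :=
    fun η x => ((x:ℂ) - ((E:ℂ) + η * Complex.I))⁻¹ * ((x:ℂ) - (E:ℂ))⁻¹ with hJf
  set J : ℝ → ℂ := fun η => ∫ x, Jf η x ∂μ with hJdef
  have hJbnd : ∀ η : ℝ, ∀ᵐ x ∂μ, ‖Jf η x‖ ≤ δ⁻¹ * δ⁻¹ := by
    intro η
    filter_upwards [hae1] with x hx
    rw [hJf, norm_mul]
    exact mul_le_mul (hbnd1 η x hx) (hbnd0 x hx) (norm_nonneg _) (by positivity)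
  have hintJ : ∀ η : ℝ, Integrable (Jf η) μ := by
    intro η
    exact (integrable_const (δ⁻¹ * δ⁻¹)).mono' ((hmeas1 μ η).mul hmeas0) (hJbnd η)
  -- I₀
  set I₀ : ℝ := ∫ x, ((x - E) * (x - E))⁻¹ ∂μ with hI₀
  have hmeasI : AEStronglyMeasurable (fun x : ℝ => ((x - E) * (x - E))⁻¹) μ :=
    (((measurable_id.sub_const E).mul (measurable_id.sub_const E)).inv).aestronglyMeasurable
  have hintI : Integrable (fun x : ℝ => ((x - E) * (x - E))⁻¹) μ := by
    refine (integrable_const ((δ * δ)⁻¹)).mono' hmeasI ?_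
    filter_upwards [hae1] with x hx
    rw [Real.norm_eq_abs, abs_inv]
    refine inv_anti₀ (by positivity) ?_
    calc δ * δ ≤ |x - E| * |x - E| :=
          mul_le_mul hx hx hdist.le (abs_nonneg _)
      _ = |(x - E) * (x - E)| := (abs_mul _ _).symm
  have hI₀pos : 0 < I₀ := by
    have hmono : ∀ᵐ x ∂μ, (R * R)⁻¹ ≤ ((x - E) * (x - E))⁻¹ := by
      filter_upwards [hae] with x hx
      obtain ⟨hx1, hx2⟩ := hx
      have habs : (x - E) * (x - E) = |x - E| * |x - E| := by
        rw [← abs_mul, abs_mul_self]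
      have h1 : 0 < (x - E) * (x - E) := by
        rw [habs]
        have : 0 < |x - E| := lt_of_lt_of_le hdist hx1
        positivity
      refine inv_anti₀ h1 ?_
      rw [habs]
      exact mul_le_mul hx2 hx2 (abs_nonneg _) hRpos.le
    have hle := integral_mono_ae (integrable_const ((R*R)⁻¹)) hintI hmono
    have hconst : ∫ _x, (R*R)⁻¹ ∂μ = (R*R)⁻¹ := by simp
    calc (0:ℝ) < (R*R)⁻¹ := by positivity
      _ = ∫ _x, (R*R)⁻¹ ∂μ := hconst.symm
      _ ≤ I₀ := hle
  -- zero of m over ℂ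
  have hz : ∫ x, ((x:ℂ) - (E:ℂ))⁻¹ ∂μ = 0 := by
    calc ∫ x, ((x:ℂ) - (E:ℂ))⁻¹ ∂μ = ∫ x, (((x - E)⁻¹ : ℝ) : ℂ) ∂μ :=
          integral_congr_ae (Eventually.of_forall fun x => by push_cast; ring)
      _ = ((∫ x, (x - E)⁻¹ ∂μ : ℝ) : ℂ) := my_integral_ofReal μ _
      _ = 0 := by rw [hzero, Complex.ofReal_zero]
  -- J tends to I₀
  have hJlim : Tendsto J l (𝓝 (I₀ : ℂ)) := by
    have htarget : ((I₀ : ℝ) : ℂ) = ∫ x, ((x:ℂ) - (E:ℂ))⁻¹ * ((x:ℂ) - (E:ℂ))⁻¹ ∂μ := by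
      calc ((I₀ : ℝ) : ℂ) = ∫ x, ((((x - E) * (x - E))⁻¹ : ℝ) : ℂ) ∂μ :=
            (my_integral_ofReal μ _).symm
        _ = ∫ x, ((x:ℂ) - (E:ℂ))⁻¹ * ((x:ℂ) - (E:ℂ))⁻¹ ∂μ :=
            integral_congr_ae (Eventually.of_forall fun x => by push_cast [mul_inv]; ring)
    rw [htarget]
    refine tendsto_integral_filter_of_dominated_convergence (fun _ => δ⁻¹ * δ⁻¹)
      (Eventually.of_forall fun η => (hmeas1 μ η).mul hmeas0)
      (Eventually.of_forall fun η => hJbnd η) (integrable_const _) ?_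
    filter_upwards [hae1] with x hx
    have hxE : (x:ℂ) - (E:ℂ) ≠ 0 := hneq0 x hx
    have h1 : Tendsto (fun η : ℝ => (x:ℂ) - ((E:ℂ) + η * Complex.I)) l
        (𝓝 ((x:ℂ) - (E:ℂ))) := by
      have hc : Continuous (fun η : ℝ => (x:ℂ) - ((E:ℂ) + η * Complex.I)) := by
        continuity
      have h2 : Tendsto (fun η : ℝ => (x:ℂ) - ((E:ℂ) + η * Complex.I)) (𝓝[>] (0:ℝ))
          (𝓝 ((x:ℂ) - ((E:ℂ) + (0:ℝ) * Complex.I))) :=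
        (hc.tendsto 0).mono_left nhdsWithin_le_nhds
      simpa using h2
    exact (h1.inv₀ hxE).mul tendsto_const_nhds
  -- m = iη J η for η > 0
  have hm_eq : ∀ η : ℝ, 0 < η →
      mTr μ ((E:ℂ) + η * Complex.I) = ((η:ℂ) * Complex.I) * J η := by
    intro η hη
    have hptws : ∀ᵐ (x : ℝ) ∂μ, ((x:ℂ) - ((E:ℂ) + η * Complex.I))⁻¹
        = ((x:ℂ) - (E:ℂ))⁻¹ + ((η:ℂ) * Complex.I) * Jf η x := by
      filter_upwards [hae1] with x hx
      have hxE : (x:ℂ) - (E:ℂ) ≠ 0 := hneq0 x hx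
      have hxω : (x:ℂ) - ((E:ℂ) + η * Complex.I) ≠ 0 := hne x η hη.ne'
      rw [hJf]
      field_simp
      ring
    rw [mTr, integral_congr_ae hptws, integral_add hint0 ((hintJ η).const_mul _),
      integral_const_mul, hz, zero_add, hJdef]
  clear_value Jf J I₀
  -- Part B : g tends to 1/I₀
  set g : ℝ → ℝ := fun η => η * ((FTr μ ((E:ℂ) + η * Complex.I)).im - η) with hg
  clear_value g
  have hJne : ∀ᶠ η in l, J η ≠ 0 := hJlim.eventually_ne (by exact_mod_cast hI₀pos.ne')
  have hηpos : ∀ᶠ η in l, 0 < η := by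
    filter_upwards [self_mem_nhdsWithin] with η hη using hη
  have hBeq : ∀ᶠ η in l, g η = (J η).re / Complex.normSq (J η) - η * η := by
    filter_upwards [hJne, hηpos] with η hJη hη
    have hηne : η ≠ 0 := hη.ne'
    have hmval : mTr μ ((E:ℂ) + η * Complex.I) = ((η:ℂ) * Complex.I) * J η := hm_eq η hη
    have hnsq : Complex.normSq (J η) ≠ 0 := by
      simpa [Complex.normSq_eq_zero] using hJη
    have him : (FTr μ ((E:ℂ) + η * Complex.I)).im
        = (J η).re / (η * Complex.normSq (J η)) := by
      rw [FTr, Complex.neg_im, Complex.inv_im, hmval]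
      have h1 : (((η:ℂ) * Complex.I) * J η).im = η * (J η).re := by
        simp [Complex.mul_im]
      have h2 : Complex.normSq (((η:ℂ) * Complex.I) * J η)
          = (η * η) * Complex.normSq (J η) := by
        rw [Complex.normSq_mul, Complex.normSq_mul, Complex.normSq_ofReal]
        simp [Complex.normSq_I]
      rw [h1, h2, neg_div, neg_neg,
        show η * η * Complex.normSq (J η) = η * (η * Complex.normSq (J η)) by ring,
        mul_div_mul_left _ _ hηne]
    simp only [hg]
    rw [him, mul_sub, ← mul_div_assoc, mul_div_mul_left _ _ hηne]
  have hB : Tendsto g l (𝓝 (1 / I₀)) := by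
    have h1 : Tendsto (fun η => (J η).re / Complex.normSq (J η) - η * η) l
        (𝓝 (((I₀:ℂ)).re / Complex.normSq (I₀ : ℂ) - 0 * 0)) := by
      refine Tendsto.sub (Tendsto.div ?_ ?_ ?_) ?_
      · exact (Complex.continuous_re.tendsto _).comp hJlim
      · exact (Complex.continuous_normSq.tendsto _).comp hJlim
      · rw [Complex.normSq_ofReal]; positivity
      · have h0 : Tendsto (fun η : ℝ => η) l (𝓝 0) := tendsto_id.mono_left nhdsWithin_le_nhds
        exact h0.mul h0
    have h2 : ((I₀:ℂ)).re / Complex.normSq (I₀ : ℂ) - 0 * 0 = 1 / I₀ := by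
      rw [Complex.normSq_ofReal, Complex.ofReal_re]
      field_simp
      ring
    rw [h2] at h1
    exact h1.congr' (by filter_upwards [hBeq] with η hη; rw [hη]) |>.congr (fun _ => rfl)
  -- Part C
  have hμhim : ∀ η : ℝ, 0 < η → g η
      = ∫ x, (η * η) * ((x - E) * (x - E) + η * η)⁻¹ ∂μh := by
    intro η hη
    have hωim : (0:ℝ) < ((E:ℂ) + η * Complex.I).im := by simpa using hη
    have hNeq := hNev.2 ((E:ℂ) + η * Complex.I) hωim
    have hint5 : Integrable (fun x : ℝ => ((x:ℂ) - ((E:ℂ) + η * Complex.I))⁻¹) μh := by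
      refine (integrable_const (η⁻¹)).mono' (hmeas1 μh η) ?_
      refine Eventually.of_forall fun x => ?_
      rw [norm_inv]
      refine inv_anti₀ hη ?_
      have h3 := hlb2 x η
      rwa [abs_of_pos hη] at h3
    have him := my_integral_im hint5
    have hlhs : (FTr μ ((E:ℂ) + η * Complex.I) - ((E:ℂ) + η * Complex.I)).im
        = (FTr μ ((E:ℂ) + η * Complex.I)).im - η := by
      rw [Complex.sub_im]
      congr 1
      simp
    have hint_im : ∀ x : ℝ, (((x:ℂ) - ((E:ℂ) + η * Complex.I))⁻¹).im
        = η * ((x - E) * (x - E) + η * η)⁻¹ := by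
      intro x
      rw [Complex.inv_im, hsub_im, hnormSq]
      rw [neg_neg, div_eq_mul_inv]
    have key : (FTr μ ((E:ℂ) + η * Complex.I)).im - η
        = ∫ x, η * ((x - E) * (x - E) + η * η)⁻¹ ∂μh := by
      rw [← hlhs, hNeq, ← him]
      exact integral_congr_ae (Eventually.of_forall fun x => hint_im x)
    simp only [hg]
    rw [key, ← integral_const_mul]
    congr 1
    funext x
    ring
  have hC : Tendsto g l (𝓝 (μh {E}).toReal) := by
    have htarget : (μh {E}).toReal
        = ∫ x, Set.indicator {E} (fun _ => (1:ℝ)) x ∂μh := by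
      rw [integral_indicator_const (1:ℝ) (measurableSet_singleton E)]
      simp
      rfl
    rw [htarget]
    have hDCT : Tendsto (fun η => ∫ x, (η * η) * ((x - E) * (x - E) + η * η)⁻¹ ∂μh) l
        (𝓝 (∫ x, Set.indicator {E} (fun _ => (1:ℝ)) x ∂μh)) := by
      refine tendsto_integral_filter_of_dominated_convergence (fun _ => (1:ℝ)) ?_ ?_
        (integrable_const _) ?_
      · refine Eventually.of_forall fun η => ?_
        exact ((((measurable_id.sub_const E).mul (measurable_id.sub_const E)).add_const
          (η*η)).inv.const_mul _).aestronglyMeasurable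
      · filter_upwards [hηpos] with η hη
        refine Eventually.of_forall fun x => ?_
        have hD : 0 < (x - E) * (x - E) + η * η := by nlinarith [mul_self_nonneg (x - E)]
        rw [Real.norm_eq_abs, _root_.abs_of_nonneg (by positivity)]
        rw [mul_inv_le_iff₀ hD]
        nlinarith [mul_self_nonneg (x - E)]
      · refine Eventually.of_forall fun x => ?_
        by_cases hx : x = E
        · rw [hx, Set.indicator_of_mem (mem_singleton _)]
          have heq : ∀ᶠ η in l, (1:ℝ) = (η * η) * ((E - E) * (E - E) + η * η)⁻¹ := by
            filter_upwards [hηpos] with η hη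
            rw [sub_self, mul_zero, zero_add]
            exact (mul_inv_cancel₀ (by positivity : η * η ≠ 0)).symm
          exact Tendsto.congr' heq tendsto_const_nhds
        · have hne0 : (x - E) * (x - E) ≠ 0 := by
            have hs : x - E ≠ 0 := sub_ne_zero.mpr hx
            positivity
          have hid : Tendsto (fun η : ℝ => η) l (𝓝 0) :=
            tendsto_id.mono_left nhdsWithin_le_nhds
          have h1 : Tendsto (fun η : ℝ => (η * η) * ((x - E) * (x - E) + η * η)⁻¹) l
              (𝓝 ((0 * 0) * ((x - E) * (x - E) + 0 * 0)⁻¹)) :=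
            (hid.mul hid).mul ((tendsto_const_nhds.add (hid.mul hid)).inv₀
              (by simpa using hne0))
          have hval : x ∉ ({E} : Set ℝ) := by simpa using hx
          rw [Set.indicator_of_notMem hval]
          simpa using h1
    refine hDCT.congr' ?_
    filter_upwards [hηpos] with η hη
    exact (hμhim η hη).symm
  -- conclude
  have heq := tendsto_nhds_unique hB hC
  have hpos : 0 < (μh {E}).toReal := heq ▸ (by positivity : (0:ℝ) < 1 / I₀)
  exact (ENNReal.toReal_pos_iff.mp hpos).1


end
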